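/- arXiv:1606.01190 — 3 statements merged into one kernel-verified Lean document; each statement's English description precedes it below -/
import Mathlib

section
/- If an N-player concave game over the feasible sets 𝒳_i satisfies the diagonal strict concavity condition — tr[(X' − X)(V(X') − V(X))] ≤ 0 for all X, X' ∈ 𝒳, with equality if and only if X = X' — then the game admits a unique Nash equilibrium. -/
open Matrix MeasureTheory Filter Topology
open scoped ComplexOrder

noncomputable section

/-- Square complex matrices of size `m`. -/
abbrev Mat (m : ℕ) := Matrix (Fin m) (Fin m) ℂ

/-- The spectral norm (largest absolute eigenvalue) of a Hermitian matrix. -/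
noncomputable def specNorm {m : ℕ} (A : Mat m) : ℝ :=
  if h : A.IsHermitian then ⨆ j, |h.eigenvalues j| else 0

/-- The nuclear (trace) norm: the sum of the absolute values of the eigenvalues. -/
noncomputable def nucNorm {m : ℕ} (A : Mat m) : ℝ :=
  if h : A.IsHermitian then ∑ j, |h.eigenvalues j| else 0

/-- A profile of actions, one positive-semidefinite matrix per player. -/
abbrev Profile (N : ℕ) (M : Fin N → ℕ) := ∀ i, Mat (M i)

/-- An `N`-player concave game: player `i` controls a Hermitian positive-semidefinite
matrix of size `M i` with nuclear norm at most `A i`; `u i` is the (continuous) utility of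
player `i`, concave in the player's own variable, and `V X i` is the individual payoff
gradient `∇_{X_i} u_i(X)` (a Hermitian matrix), characterized by directional derivatives. -/
structure ConcaveGame (N : ℕ) (M : Fin N → ℕ) where
  A : Fin N → ℝ
  A_pos : ∀ i, 0 < A i
  u : Fin N → Profile N M → ℝ
  V : Profile N M → ∀ i, Mat (M i)
  u_cont : ∀ i, Continuous (u i)
  V_cont : Continuous V
  V_herm : ∀ X i, (V X i).IsHermitian
  grad : ∀ (X : Profile N M) (i : Fin N) (Z : Mat (M i)), Z.IsHermitian →
    HasDerivAt (fun t : ℝ => u i (Function.update X i (X i + t • Z)))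
      ((V X i * Z).trace.re) 0
  u_concave : ∀ (i : Fin N) (X : Profile N M),
    ConcaveOn ℝ {Xi : Mat (M i) | Xi.PosSemidef ∧ nucNorm Xi ≤ A i}
      (fun Xi => u i (Function.update X i Xi))

namespace ConcaveGame

variable {N : ℕ} {M : Fin N → ℕ}

/-- The feasible action set `𝒳_i` of player `i`. -/
def feasible (G : ConcaveGame N M) (i : Fin N) : Set (Mat (M i)) :=
  {Xi | Xi.PosSemidef ∧ nucNorm Xi ≤ G.A i}

/-- Feasibility of a profile: `X ∈ 𝒳 = ∏ᵢ 𝒳ᵢ`. -/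
def FeasibleP (G : ConcaveGame N M) (X : Profile N M) : Prop :=
  ∀ i, X i ∈ G.feasible i

/-- The set of feasible profiles. -/
def feasibleSet (G : ConcaveGame N M) : Set (Profile N M) :=
  {X | G.FeasibleP X}

/-- Nash equilibrium: a feasible profile that is unilaterally stable. -/
def NashEq (G : ConcaveGame N M) (Xs : Profile N M) : Prop :=
  G.FeasibleP Xs ∧
    ∀ i, ∀ Xi ∈ G.feasible i, G.u i (Function.update Xs i Xi) ≤ G.u i Xs

/-- `tr[(X − X*) V(X)]`, summed over the players' blocks. -/
def relV (G : ConcaveGame N M) (Xs X : Profile N M) : ℝ :=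
  ∑ i, ((X i - Xs i) * G.V X i).trace.re

/-- Global variational stability of a profile `X*`. -/
def GloballyStable (G : ConcaveGame N M) (Xs : Profile N M) : Prop :=
  G.FeasibleP Xs ∧ ∀ X, G.FeasibleP X → G.relV Xs X ≤ 0

end ConcaveGame

namespace ConcaveGame

/-- Diagonal strict concavity (DSC): `tr[(X' − X)(V(X') − V(X))] ≤ 0` for all feasible
`X, X'`, with equality if and only if `X = X'`. -/
def DSC {N : ℕ} {M : Fin N → ℕ} (G : ConcaveGame N M) : Prop :=
  ∀ X X' : Profile N M, G.FeasibleP X → G.FeasibleP X' →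
    (∑ i, ((X' i - X i) * (G.V X' i - G.V X i)).trace.re ≤ 0 ∧
      (∑ i, ((X' i - X i) * (G.V X' i - G.V X i)).trace.re = 0 ↔ X = X'))

end ConcaveGame


/-! ### Auxiliary lemmas -/

section Aux

open Matrix

lemma trace_eq_sum_eigenvalues {m : ℕ} (A : Mat m) (hA : A.IsHermitian) :
    A.trace = ∑ i, (hA.eigenvalues i : ℂ) := by
  conv_lhs => rw [hA.spectral_theorem]
  rw [Unitary.conjStarAlgAut_apply, Matrix.trace_mul_cycle]
  rw [Matrix.mem_unitaryGroup_iff'.mp (hA.eigenvectorUnitary).2, Matrix.one_mul,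
    Matrix.trace_diagonal]
  simp

lemma nucNorm_of_posSemidef {m : ℕ} {X : Mat m} (hX : X.PosSemidef) :
    nucNorm X = X.trace.re := by
  rw [nucNorm, dif_pos hX.1]
  have h1 : X.trace.re = ∑ j, hX.1.eigenvalues j := by
    rw [trace_eq_sum_eigenvalues X hX.1]
    simp
  rw [h1]
  exact Finset.sum_congr rfl fun j _ => abs_of_nonneg (hX.eigenvalues_nonneg j)

lemma star_pi_single {m : ℕ} (a : Fin m) (c : ℂ) :
    star (Pi.single a c : Fin m → ℂ) = Pi.single a (star c) := by
  ext j
  by_cases h : j = a <;> simp [Pi.single_apply, h]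

lemma posSemidef_diag_nonneg {m : ℕ} {X : Mat m} (hX : X.PosSemidef) (a : Fin m) :
    0 ≤ X a a := by
  have h := hX.dotProduct_mulVec_nonneg (Pi.single a 1)
  simpa [star_pi_single, single_dotProduct] using h

lemma posSemidef_trace_re_eq {m : ℕ} (X : Mat m) :
    X.trace.re = ∑ c, (X c c).re := by
  rw [Matrix.trace]
  exact Complex.re_sum _ _

lemma posSemidef_abs_entry_le_trace {m : ℕ} {X : Mat m} (hX : X.PosSemidef) (a b : Fin m) :
    ‖X a b‖ ≤ X.trace.re := by
  have hdre : ∀ c, 0 ≤ (X c c).re := by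
    intro c
    have h := Complex.le_def.1 (posSemidef_diag_nonneg hX c)
    simpa using h.1
  have hdim : ∀ c, (X c c).im = 0 := by
    intro c
    have h := Complex.le_def.1 (posSemidef_diag_nonneg hX c)
    simpa using h.2.symm
  have htr : X.trace.re = ∑ c, (X c c).re := posSemidef_trace_re_eq X
  by_cases hab : a = b
  · subst hab
    have : ‖X a a‖ = (X a a).re := by
      rw [Complex.norm_def, Complex.normSq_apply, hdim a]
      simp [Real.sqrt_mul_self (hdre a)]
    rw [this, htr]
    exact Finset.single_le_sum (fun c _ => hdre c) (Finset.mem_univ a)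
  · set r := ‖X a b‖ with hr
    set x : Fin m → ℂ := Pi.single a (X a b) - Pi.single b (r : ℂ) with hx
    have h := hX.dotProduct_mulVec_nonneg x
    have hba : X b a = (starRingEnd ℂ) (X a b) := by
      have := hX.1
      rw [Matrix.IsHermitian] at this
      calc X b a = Xᴴ b a := by rw [this]
        _ = (starRingEnd ℂ) (X a b) := rfl
    have key : star x ⬝ᵥ X *ᵥ x
        = ((r^2 * ((X a a).re + (X b b).re) - 2*r^3 : ℝ) : ℂ) := by
      have haa : X a a = ((X a a).re : ℂ) := Complex.ext rfl (by simp [hdim a])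
      have hbb : X b b = ((X b b).re : ℂ) := Complex.ext rfl (by simp [hdim b])
      simp only [hx, Matrix.mulVec_sub, sub_dotProduct, dotProduct_sub,
        Matrix.mulVec_single, star_sub, star_pi_single, single_dotProduct,
        Pi.smul_apply, op_smul_eq_mul, Matrix.col_apply]
      rw [haa, hbb, hba]
      have hzz : (starRingEnd ℂ) (X a b) * X a b = ((r : ℂ))^2 := by
        rw [mul_comm, Complex.mul_conj, hr]
        rw [← Complex.sq_norm]
        push_cast
        ring
      simp only [Complex.star_def, Complex.conj_ofReal]
      push_cast
      simp only [Complex.ofReal_re]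
      linear_combination ((((X a a).re : ℂ)) - 2 * (r:ℂ)) * hzz
    rw [key] at h
    have h0 : (0:ℝ) ≤ r^2 * ((X a a).re + (X b b).re) - 2*r^3 := Complex.zero_le_real.1 h
    have hsum : (X a a).re + (X b b).re ≤ X.trace.re := by
      have hpair : ∑ c ∈ ({a,b} : Finset (Fin m)), (X c c).re
          = (X a a).re + (X b b).re := Finset.sum_pair hab
      rw [htr, ← hpair]
      exact Finset.sum_le_sum_of_subset_of_nonneg (Finset.subset_univ _)
        (fun c _ _ => hdre c)
    have hrnn : 0 ≤ r := norm_nonneg _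
    rcases eq_or_lt_of_le hrnn with h0r | hrpos
    · rw [← h0r, htr]
      exact Finset.sum_nonneg fun c _ => hdre c
    · nlinarith [mul_pos hrpos hrpos]


lemma simplex_sep_lemma {k : Type*} [Fintype k] [DecidableEq k] [Nonempty k] (B : k → k → ℝ)
    (hsym : ∀ p q, 0 ≤ B p q + B q p) :
    ∃ l : k → ℝ, (∀ p, 0 ≤ l p) ∧ ∑ p, l p = 1 ∧ ∀ p, 0 ≤ ∑ q, B p q * l q := by
  classical
  by_contra hcon
  push_neg at hcon
  set L : (k → ℝ) →ₗ[ℝ] (k → ℝ) :=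
    { toFun := fun l p => ∑ q, B p q * l q
      map_add' := by
        intro x y; funext p
        simp [mul_add, Finset.sum_add_distrib]
      map_smul' := by
        intro c x; funext p
        simp [Finset.mul_sum, mul_left_comm] } with hLdef
  have hLapp : ∀ l p, L l p = ∑ q, B p q * l q := fun l p => rfl
  have hquad : ∀ w : k → ℝ, (∀ p, 0 ≤ w p) → 0 ≤ ∑ p, L w p * w p := by
    intro w hw
    have e1 : (∑ p, L w p * w p) = ∑ p, ∑ q, B p q * (w q * w p) := by
      refine Finset.sum_congr rfl fun p _ => ?_
      rw [hLapp, Finset.sum_mul]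
      exact Finset.sum_congr rfl fun q _ => by ring
    have e2 : (∑ p, L w p * w p) = ∑ p, ∑ q, B q p * (w q * w p) := by
      rw [e1, Finset.sum_comm]
      exact Finset.sum_congr rfl fun p _ => Finset.sum_congr rfl fun q _ => by ring
    have h1 : 0 ≤ (∑ p, ∑ q, B p q * (w q * w p)) + (∑ p, ∑ q, B q p * (w q * w p)) := by
      rw [← Finset.sum_add_distrib]
      refine Finset.sum_nonneg fun p _ => ?_
      rw [← Finset.sum_add_distrib]
      refine Finset.sum_nonneg fun q _ => ?_
      have h2 : B p q * (w q * w p) + B q p * (w q * w p) = (B p q + B q p) * (w q * w p) := by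
        ring
      rw [h2]
      exact mul_nonneg (hsym p q) (mul_nonneg (hw q) (hw p))
    linarith [e1, e2, h1]
  set S : Set (k → ℝ) := L '' stdSimplex ℝ k with hSdef
  set T : Set (k → ℝ) := {z | ∀ p, 0 ≤ z p} with hTdef
  have hdisj : Disjoint S T := by
    rw [Set.disjoint_left]
    rintro z ⟨l, hl, rfl⟩ hzT
    obtain ⟨p, hp⟩ := hcon l hl.1 hl.2
    exact absurd (hzT p) (not_le.2 hp)
  have hLcont : Continuous L := L.continuous_of_finiteDimensional
  obtain ⟨f, u, v, hfS, huv, hfT⟩ :=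
    geometric_hahn_banach_compact_closed
      ((convex_stdSimplex ℝ k).linear_image L)
      ((isCompact_stdSimplex ℝ k).image hLcont)
      (by intro x hx y hy a b ha hb hab p
          exact add_nonneg (mul_nonneg ha (hx p)) (mul_nonneg hb (hy p)) :
        Convex ℝ T)
      (by have : T = ⋂ p, (fun z : k → ℝ => z p) ⁻¹' Set.Ici 0 := by
            ext z; simp [hTdef, Set.mem_iInter]
          rw [this]
          exact isClosed_iInter fun p => isClosed_Ici.preimage (continuous_apply p))
      hdisj
  have hv0 : v < 0 := by
    have h0T : (0 : k → ℝ) ∈ T := fun p => le_refl 0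
    have := hfT 0 h0T
    simpa using this
  have hfTnn : ∀ z ∈ T, 0 ≤ f z := by
    intro z hz
    by_contra hneg
    push_neg at hneg
    have hr : 0 < (v - 1) / f z := div_pos_of_neg_of_neg (by linarith) hneg
    have hrz : ((v - 1) / f z) • z ∈ T := fun p => mul_nonneg hr.le (hz p)
    have := hfT _ hrz
    rw [_root_.map_smul, smul_eq_mul, div_mul_cancel₀ _ (ne_of_lt hneg)] at this
    linarith
  set μ : k → ℝ := fun p => f (fun j => if p = j then 1 else 0) with hμdef
  have hμnn : ∀ p, 0 ≤ μ p := by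
    intro p
    refine hfTnn _ fun q => ?_
    by_cases h : p = q <;> simp [h]
  have hfeq : ∀ z : k → ℝ, f z = ∑ p, z p * μ p := by
    intro z
    conv_lhs => rw [pi_eq_sum_univ z]
    rw [map_sum]
    exact Finset.sum_congr rfl fun p _ => by rw [_root_.map_smul, smul_eq_mul]
  set s : ℝ := ∑ p, μ p with hsdef
  have hs_nonneg : 0 ≤ s := Finset.sum_nonneg fun p _ => hμnn p
  have hcard : 0 < (Fintype.card k : ℝ) := by
    have := Fintype.card_pos (α := k)
    exact_mod_cast this
  have huniform : (fun _ : k => (Fintype.card k : ℝ)⁻¹) ∈ stdSimplex ℝ k := by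
    constructor
    · intro p; positivity
    · simp [Finset.sum_const, Finset.card_univ]
  rcases eq_or_lt_of_le hs_nonneg with hs0 | hs_pos
  · have hμ0 : ∀ p, μ p = 0 := by
      intro p
      have := (Finset.sum_eq_zero_iff_of_nonneg (fun q _ => hμnn q)).1 hs0.symm
      exact this p (Finset.mem_univ p)
    have h1 := hfS (L fun _ => (Fintype.card k : ℝ)⁻¹) ⟨_, huniform, rfl⟩
    rw [hfeq] at h1
    simp [hμ0] at h1
    linarith
  · set lam : k → ℝ := fun p => μ p / s with hlamdef
    have hlam_mem : lam ∈ stdSimplex ℝ k := by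
      constructor
      · intro p; exact div_nonneg (hμnn p) hs_nonneg
      · rw [← Finset.sum_div]
        field_simp
        exact hsdef.symm
    have h1 := hfS (L lam) ⟨_, hlam_mem, rfl⟩
    rw [hfeq] at h1
    have h2 : 0 ≤ ∑ p, L lam p * lam p := hquad lam fun p => hlam_mem.1 p
    have h3 : ∑ p, L lam p * μ p = s * ∑ p, L lam p * lam p := by
      rw [Finset.mul_sum]
      refine Finset.sum_congr rfl fun p _ => ?_
      rw [hlamdef]
      field_simp
    nlinarith

lemma posSemidef_real_smul {m : ℕ} {X : Mat m} (h : X.PosSemidef) {t : ℝ} (ht : 0 ≤ t) :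
    (t • X).PosSemidef := by
  have he : t • X = (t : ℂ) • X := by
    ext a b
    simp [Complex.real_smul]
  rw [he]
  refine Matrix.PosSemidef.of_dotProduct_mulVec_nonneg ?_ ?_
  · have h1 := h.1
    unfold Matrix.IsHermitian at h1 ⊢
    rw [Matrix.conjTranspose_smul, h1, Complex.star_def, Complex.conj_ofReal]
  · intro x
    rw [Matrix.smul_mulVec, dotProduct_smul, smul_eq_mul]
    exact mul_nonneg (by exact_mod_cast ht) (h.dotProduct_mulVec_nonneg x)

namespace ConcaveGame

variable {N : ℕ} {M : Fin N → ℕ}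

lemma feasible_eq (G : ConcaveGame N M) (i : Fin N) :
    G.feasible i = {Xi : Mat (M i) | Xi.PosSemidef ∧ Xi.trace.re ≤ G.A i} := by
  ext Xi
  constructor
  · rintro ⟨h1, h2⟩
    exact ⟨h1, by rwa [nucNorm_of_posSemidef h1] at h2⟩
  · rintro ⟨h1, h2⟩
    exact ⟨h1, by rwa [nucNorm_of_posSemidef h1]⟩

lemma convex_feasible (G : ConcaveGame N M) (i : Fin N) : Convex ℝ (G.feasible i) := by
  rw [feasible_eq]
  intro X hX Y hY a b ha hb hab
  refine ⟨(posSemidef_real_smul hX.1 ha).add (posSemidef_real_smul hY.1 hb), ?_⟩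
  have htr : (a • X + b • Y).trace = a • X.trace + b • Y.trace := by
    rw [Matrix.trace_add, Matrix.trace_smul, Matrix.trace_smul]
  rw [htr]
  have : (a • X.trace + b • Y.trace).re = a * X.trace.re + b * Y.trace.re := by
    simp [Complex.real_smul]
  rw [this]
  calc a * X.trace.re + b * Y.trace.re ≤ a * G.A i + b * G.A i := by
        exact add_le_add (mul_le_mul_of_nonneg_left hX.2 ha)
          (mul_le_mul_of_nonneg_left hY.2 hb)
    _ = G.A i := by rw [← add_mul, hab, one_mul]

lemma zero_mem_feasible (G : ConcaveGame N M) (i : Fin N) : (0 : Mat (M i)) ∈ G.feasible i := by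
  rw [feasible_eq]
  exact ⟨Matrix.PosSemidef.zero, by simp [(G.A_pos i).le]⟩

lemma isClosed_feasible (G : ConcaveGame N M) (i : Fin N) : IsClosed (G.feasible i) := by
  rw [feasible_eq]
  have h1 : IsClosed {Xi : Mat (M i) | Xi.PosSemidef} := by
    have he : {Xi : Mat (M i) | Xi.PosSemidef}
        = {Xi : Mat (M i) | Xi.IsHermitian}
          ∩ ⋂ x : Fin (M i) → ℂ, {Xi : Mat (M i) | 0 ≤ star x ⬝ᵥ Xi *ᵥ x} := by
      ext Xi
      simp only [Set.mem_setOf_eq, Set.mem_inter_iff, Set.mem_iInter]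
      exact ⟨fun h => ⟨h.1, h.dotProduct_mulVec_nonneg⟩,
        fun h => Matrix.PosSemidef.of_dotProduct_mulVec_nonneg h.1 h.2⟩
    rw [he]
    refine IsClosed.inter ?_ (isClosed_iInter fun x => ?_)
    · exact isClosed_eq (continuous_id.matrix_conjTranspose) continuous_id
    · have hc : Continuous fun Xi : Mat (M i) => star x ⬝ᵥ Xi *ᵥ x :=
        continuous_const.dotProduct (continuous_id.matrix_mulVec continuous_const)
      have hcl : IsClosed {z : ℂ | 0 ≤ z} := by
        have : {z : ℂ | 0 ≤ z} = Complex.re ⁻¹' Set.Ici 0 ∩ Complex.im ⁻¹' {0} := by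
          ext z
          simp [Complex.le_def, eq_comm]
        rw [this]
        exact (isClosed_Ici.preimage Complex.continuous_re).inter
          (isClosed_singleton.preimage Complex.continuous_im)
      exact hcl.preimage hc
  have h2 : IsClosed {Xi : Mat (M i) | Xi.trace.re ≤ G.A i} := by
    have hc : Continuous fun Xi : Mat (M i) => Xi.trace.re :=
      Complex.continuous_re.comp (continuous_id.matrix_trace)
    exact isClosed_le hc continuous_const
  exact h1.inter h2

lemma isCompact_feasibleSet (G : ConcaveGame N M) : IsCompact G.feasibleSet := by
  have hsub : G.feasibleSet ⊆ Set.univ.pi fun i =>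
      Set.univ.pi fun _ : Fin (M i) => Set.univ.pi fun _ : Fin (M i) =>
        Metric.closedBall (0 : ℂ) (G.A i) := by
    intro X hX
    intro i _
    intro a _
    intro b _
    have hfi := hX i
    rw [feasible_eq] at hfi
    have := posSemidef_abs_entry_le_trace hfi.1 a b
    rw [Metric.mem_closedBall, dist_zero_right]
    calc ‖X i a b‖ = ‖X i a b‖ := rfl
      _ ≤ (X i).trace.re := this
      _ ≤ G.A i := hfi.2
  have hK : IsCompact (Set.univ.pi fun i =>
      Set.univ.pi fun _ : Fin (M i) => Set.univ.pi fun _ : Fin (M i) =>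
        Metric.closedBall (0 : ℂ) (G.A i)) :=
    isCompact_univ_pi fun i => isCompact_univ_pi fun _ => isCompact_univ_pi fun _ =>
      isCompact_closedBall _ _
  have hcl : IsClosed G.feasibleSet := by
    have he : G.feasibleSet = ⋂ i, (fun X : Profile N M => X i) ⁻¹' G.feasible i := by
      ext X
      simp only [feasibleSet, FeasibleP, Set.mem_setOf_eq, Set.mem_iInter, Set.mem_preimage]
    rw [he]
    exact isClosed_iInter fun i => (isClosed_feasible G i).preimage (continuous_apply i)
  exact hK.of_isClosed_subset hcl hsub

lemma convex_feasibleSet (G : ConcaveGame N M) : Convex ℝ G.feasibleSet := by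
  intro X hX Y hY a b ha hb hab i
  exact convex_feasible G i (hX i) (hY i) ha hb hab

end ConcaveGame

namespace ConcaveGame

variable {N : ℕ} {M : Fin N → ℕ}

lemma exists_globallyStable (G : ConcaveGame N M) (hDSC : G.DSC) :
    ∃ Xs, G.GloballyStable Xs := by
  classical
  set K : {Y : Profile N M // G.FeasibleP Y} → Set (Profile N M) := fun Y =>
    {Z | ∑ i, ((Y.1 i - Z i) * G.V Y.1 i).trace.re ≤ 0} with hKdef
  have hKcl : ∀ Y, IsClosed (K Y) := by
    intro Y
    have hc : Continuous fun Z : Profile N M =>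
        ∑ i, ((Y.1 i - Z i) * G.V Y.1 i).trace.re := by
      refine continuous_finset_sum _ fun i _ => ?_
      exact Complex.continuous_re.comp
        (((continuous_const.sub (continuous_apply i)).matrix_mul continuous_const).matrix_trace)
    exact isClosed_le hc continuous_const
  have hfin : ∀ u : Finset {Y : Profile N M // G.FeasibleP Y},
      (G.feasibleSet ∩ ⋂ Y ∈ u, K Y).Nonempty := by
    intro u
    rcases u.eq_empty_or_nonempty with rfl | hu
    · refine ⟨fun i => 0, fun i => G.zero_mem_feasible i, ?_⟩
      simp
    · haveI : Nonempty u := Finset.nonempty_coe_sort.mpr hu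
      set B : u → u → ℝ :=
        fun p q => ∑ i, ((q.1.1 i - p.1.1 i) * G.V p.1.1 i).trace.re with hBdef
      have hflip : ∀ p q : u, ∀ i,
          ((q.1.1 i - p.1.1 i) * (G.V q.1.1 i - G.V p.1.1 i)).trace.re
            = -(((q.1.1 i - p.1.1 i) * G.V p.1.1 i).trace.re
                + ((p.1.1 i - q.1.1 i) * G.V q.1.1 i).trace.re) := by
        intro p q i
        have e1 : ((p.1.1 i - q.1.1 i) * G.V q.1.1 i).trace.re
            = -(((q.1.1 i - p.1.1 i) * G.V q.1.1 i).trace.re) := by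
          rw [← neg_sub (q.1.1 i) (p.1.1 i), Matrix.neg_mul, Matrix.trace_neg, Complex.neg_re]
        rw [e1, Matrix.mul_sub, Matrix.trace_sub, Complex.sub_re]
        ring
      have hsym : ∀ p q : u, 0 ≤ B p q + B q p := by
        intro p q
        have hD := (hDSC p.1.1 q.1.1 p.1.2 q.1.2).1
        have hexp : ∑ i, ((q.1.1 i - p.1.1 i) * (G.V q.1.1 i - G.V p.1.1 i)).trace.re
            = -(B p q + B q p) := by
          rw [hBdef]
          rw [Finset.sum_congr rfl fun i _ => hflip p q i, Finset.sum_neg_distrib,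
            Finset.sum_add_distrib]
        rw [hexp] at hD
        linarith
      obtain ⟨l, hl0, hl1, hlB⟩ := simplex_sep_lemma B hsym
      set Z : Profile N M := ∑ q : u, l q • (q.1.1 : Profile N M) with hZdef
      have hZfeas : Z ∈ G.feasibleSet := by
        refine (convex_feasibleSet G).sum_mem (fun q _ => hl0 q) hl1 (fun q _ => q.1.2)
      have hZapp : ∀ i, Z i = ∑ q : u, l q • q.1.1 i := by
        intro i
        rw [hZdef]
        simp [Finset.sum_apply]
      have hmem : ∀ p : u, Z ∈ K p.1 := by
        intro p
        have hdiff : ∀ i, p.1.1 i - Z i = ∑ q : u, l q • (p.1.1 i - q.1.1 i) := by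
          intro i
          have : ∑ q : u, l q • (p.1.1 i - q.1.1 i)
              = (∑ q : u, l q) • p.1.1 i - ∑ q : u, l q • q.1.1 i := by
            rw [Finset.sum_smul]
            rw [← Finset.sum_sub_distrib]
            exact Finset.sum_congr rfl fun q _ => smul_sub _ _ _
          rw [this, hl1, one_smul, hZapp]
        have hterm : ∀ i, ((p.1.1 i - Z i) * G.V p.1.1 i).trace.re
            = ∑ q : u, l q * ((p.1.1 i - q.1.1 i) * G.V p.1.1 i).trace.re := by
          intro i
          rw [hdiff i, Matrix.sum_mul]
          have : ∀ q : u, (l q • (p.1.1 i - q.1.1 i)) * G.V p.1.1 i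
              = l q • ((p.1.1 i - q.1.1 i) * G.V p.1.1 i) := fun q =>
            Matrix.smul_mul _ _ _
          rw [Finset.sum_congr rfl fun q _ => this q, Matrix.trace_sum, Complex.re_sum]
          refine Finset.sum_congr rfl fun q _ => ?_
          rw [Matrix.trace_smul]
          simp [Complex.real_smul]
        show ∑ i, ((p.1.1 i - Z i) * G.V p.1.1 i).trace.re ≤ 0
        rw [Finset.sum_congr rfl fun i _ => hterm i, Finset.sum_comm]
        have hBp := hlB p
        have : ∑ q : u, ∑ i, l q * ((p.1.1 i - q.1.1 i) * G.V p.1.1 i).trace.re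
            = -∑ q : u, B p q * l q := by
          rw [← Finset.sum_neg_distrib]
          refine Finset.sum_congr rfl fun q _ => ?_
          rw [hBdef, ← Finset.mul_sum]
          have : ∑ i, ((p.1.1 i - q.1.1 i) * G.V p.1.1 i).trace.re
              = -∑ i, ((q.1.1 i - p.1.1 i) * G.V p.1.1 i).trace.re := by
            rw [← Finset.sum_neg_distrib]
            refine Finset.sum_congr rfl fun i _ => ?_
            rw [← neg_sub (q.1.1 i) (p.1.1 i), Matrix.neg_mul, Matrix.trace_neg, Complex.neg_re]
          rw [this]
          ring
        rw [this]
        linarith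
      refine ⟨Z, hZfeas, ?_⟩
      rw [Set.mem_iInter₂]
      intro Y hY
      exact hmem ⟨Y, hY⟩
  obtain ⟨Xs, hXsf, hXsmem⟩ :=
    (isCompact_feasibleSet G).inter_iInter_nonempty K hKcl hfin
  refine ⟨Xs, hXsf, ?_⟩
  intro X hX
  have := Set.mem_iInter.1 hXsmem ⟨X, hX⟩
  exact this

end ConcaveGame

namespace ConcaveGame

variable {N : ℕ} {M : Fin N → ℕ}

lemma stampacchia_of_globallyStable (G : ConcaveGame N M) {Xs : Profile N M}
    (h : G.GloballyStable Xs) :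
    ∀ X, G.FeasibleP X → ∑ i, ((X i - Xs i) * G.V Xs i).trace.re ≤ 0 := by
  intro X hX
  set Y : ℝ → Profile N M := fun t => Xs + t • (X - Xs) with hYdef
  have hYapp : ∀ t i, Y t i = Xs i + t • (X i - Xs i) := by
    intro t i
    simp [hYdef]
  have hYfeas : ∀ t ∈ Set.Icc (0:ℝ) 1, G.FeasibleP (Y t) := by
    intro t ht i
    have harg : Y t i = (1 - t) • Xs i + t • X i := by
      rw [hYapp]
      module
    rw [harg]
    exact (G.convex_feasible i) (h.1 i) (hX i) (by linarith [ht.2]) ht.1 (by ring)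
  set φ : ℝ → ℝ := fun t => ∑ i, ((X i - Xs i) * G.V (Y t) i).trace.re with hφdef
  have hφcont : Continuous φ := by
    have hYc : Continuous Y := continuous_const.add (continuous_id.smul continuous_const)
    refine continuous_finset_sum _ fun i _ => ?_
    exact Complex.continuous_re.comp
      ((continuous_const.matrix_mul ((continuous_apply i).comp (G.V_cont.comp hYc))).matrix_trace)
  have hφneg : ∀ t ∈ Set.Ioc (0:ℝ) 1, φ t ≤ 0 := by
    intro t ht
    have h1 := h.2 (Y t) (hYfeas t ⟨ht.1.le, ht.2⟩)
    have h2 : G.relV Xs (Y t) = t * φ t := by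
      rw [relV, hφdef, Finset.mul_sum]
      refine Finset.sum_congr rfl fun i _ => ?_
      have hd : Y t i - Xs i = t • (X i - Xs i) := by
        rw [hYapp]
        abel
      rw [hd, Matrix.smul_mul, Matrix.trace_smul]
      simp [Complex.real_smul]
    rw [h2] at h1
    by_contra hc
    push_neg at hc
    nlinarith [ht.1]
  have h0 : φ 0 ≤ 0 := by
    have htend : Filter.Tendsto φ (nhdsWithin 0 (Set.Ioi 0)) (nhds (φ 0)) :=
      (hφcont.tendsto 0).mono_left nhdsWithin_le_nhds
    refine le_of_tendsto htend ?_
    filter_upwards [Ioc_mem_nhdsGT_of_mem (Set.left_mem_Ico.2 zero_lt_one)] with t ht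
    exact hφneg t ht
  have hY0 : Y 0 = Xs := by
    funext i
    rw [hYapp]
    simp
  have hφ0 : φ 0 = ∑ i, ((X i - Xs i) * G.V Xs i).trace.re := by
    simp only [hφdef, hY0]
  linarith

lemma stampacchia_player (G : ConcaveGame N M) {Xs : Profile N M}
    (h : G.GloballyStable Xs) (i : Fin N) {Xi : Mat (M i)} (hXi : Xi ∈ G.feasible i) :
    ((Xi - Xs i) * G.V Xs i).trace.re ≤ 0 := by
  classical
  have hX : G.FeasibleP (Function.update Xs i Xi) := by
    intro j
    by_cases hj : j = i
    · subst hj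
      rwa [Function.update_self]
    · rw [Function.update_of_ne hj]
      exact h.1 j
  have hsum := stampacchia_of_globallyStable G h _ hX
  rw [Finset.sum_eq_single i (fun j _ hj => by
      rw [Function.update_of_ne hj, sub_self, Matrix.zero_mul, Matrix.trace_zero]
      simp) (fun hni => absurd (Finset.mem_univ i) hni)] at hsum
  rwa [Function.update_self] at hsum

lemma slope_tendsto_grad (G : ConcaveGame N M) (Xs : Profile N M) (i : Fin N)
    {Z : Mat (M i)} (hZ : Z.IsHermitian) :
    Filter.Tendsto
      (fun t : ℝ => (G.u i (Function.update Xs i (Xs i + t • Z)) -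
        G.u i (Function.update Xs i (Xs i + (0:ℝ) • Z))) / t)
      (nhdsWithin 0 (Set.Ioi 0)) (nhds ((G.V Xs i * Z).trace.re)) := by
  have hder := G.grad Xs i Z hZ
  have h1 := (hasDerivAt_iff_tendsto_slope.mp hder).mono_left
    (nhdsWithin_mono 0 (fun x (hx : x ∈ Set.Ioi (0:ℝ)) => ne_of_gt hx))
  refine h1.congr fun t => ?_
  rw [slope_def_field, sub_zero]

lemma nashEq_of_globallyStable (G : ConcaveGame N M) {Xs : Profile N M}
    (h : G.GloballyStable Xs) : G.NashEq Xs := by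
  classical
  refine ⟨h.1, fun i Xi hXi => ?_⟩
  set Z : Mat (M i) := Xi - Xs i with hZdef
  have hZ : Z.IsHermitian := hXi.1.1.sub (h.1 i).1.1
  set f : ℝ → ℝ := fun t => G.u i (Function.update Xs i (Xs i + t • Z)) with hfdef
  have hf0 : f 0 = G.u i Xs := by
    rw [hfdef]
    simp [Function.update_eq_self]
  have hconc := G.u_concave i Xs
  have hkey : ∀ t ∈ Set.Ioc (0:ℝ) 1,
      G.u i (Function.update Xs i Xi) - G.u i Xs ≤ (f t - f 0) / t := by
    intro t ht
    have hmem1 : Xs i ∈ {Xi : Mat (M i) | Xi.PosSemidef ∧ nucNorm Xi ≤ G.A i} := h.1 i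
    have hmem2 : Xi ∈ {Xi : Mat (M i) | Xi.PosSemidef ∧ nucNorm Xi ≤ G.A i} := hXi
    have hcomb := hconc.2 hmem1 hmem2 (by linarith [ht.2] : (0:ℝ) ≤ 1 - t) ht.1.le (by ring)
    have harg : (1 - t) • Xs i + t • Xi = Xs i + t • Z := by
      rw [hZdef]
      module
    rw [harg] at hcomb
    simp only [Function.update_eq_self, smul_eq_mul] at hcomb
    have hft : (1 - t) * G.u i Xs + t * G.u i (Function.update Xs i Xi) ≤ f t := hcomb
    rw [le_div_iff₀ ht.1, hf0]
    nlinarith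
  have hslope := slope_tendsto_grad G Xs i hZ
  have hslope' : Filter.Tendsto (fun t : ℝ => (f t - f 0) / t)
      (nhdsWithin 0 (Set.Ioi 0)) (nhds ((G.V Xs i * Z).trace.re)) := by
    refine hslope.congr fun t => ?_
    rw [hfdef]
  have hle : G.u i (Function.update Xs i Xi) - G.u i Xs ≤ (G.V Xs i * Z).trace.re := by
    refine ge_of_tendsto hslope' ?_
    filter_upwards [Ioc_mem_nhdsGT_of_mem (Set.left_mem_Ico.2 zero_lt_one)] with t ht
    exact hkey t ht
  have hvar : (G.V Xs i * Z).trace.re ≤ 0 := by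
    rw [Matrix.trace_mul_comm]
    exact stampacchia_player G h i hXi
  linarith

lemma var_of_nashEq (G : ConcaveGame N M) {Xs : Profile N M} (h : G.NashEq Xs)
    (i : Fin N) {Xi : Mat (M i)} (hXi : Xi ∈ G.feasible i) :
    ((Xi - Xs i) * G.V Xs i).trace.re ≤ 0 := by
  classical
  set Z : Mat (M i) := Xi - Xs i with hZdef
  have hZ : Z.IsHermitian := hXi.1.1.sub (h.1 i).1.1
  set f : ℝ → ℝ := fun t => G.u i (Function.update Xs i (Xs i + t • Z)) with hfdef
  have hf0 : f 0 = G.u i Xs := by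
    rw [hfdef]
    simp [Function.update_eq_self]
  have hkey : ∀ t ∈ Set.Ioc (0:ℝ) 1, (f t - f 0) / t ≤ 0 := by
    intro t ht
    have hfeas : Xs i + t • Z ∈ G.feasible i := by
      have harg : Xs i + t • Z = (1 - t) • Xs i + t • Xi := by
        rw [hZdef]
        module
      rw [harg]
      exact G.convex_feasible i (h.1 i) hXi (by linarith [ht.2]) ht.1.le (by ring)
    have hle := h.2 i _ hfeas
    refine div_nonpos_of_nonpos_of_nonneg ?_ ht.1.le
    rw [hf0]
    simpa [hfdef] using sub_nonpos.2 hle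
  have hslope := slope_tendsto_grad G Xs i hZ
  have hslope' : Filter.Tendsto (fun t : ℝ => (f t - f 0) / t)
      (nhdsWithin 0 (Set.Ioi 0)) (nhds ((G.V Xs i * Z).trace.re)) := by
    refine hslope.congr fun t => ?_
    rw [hfdef]
  have hle : (G.V Xs i * Z).trace.re ≤ 0 := by
    refine le_of_tendsto hslope' ?_
    filter_upwards [Ioc_mem_nhdsGT_of_mem (Set.left_mem_Ico.2 zero_lt_one)] with t ht
    exact hkey t ht
  rwa [Matrix.trace_mul_comm] at hle

end ConcaveGame

end Aux

/-- Rosen. If an `N`-player concave game satisfies the diagonal strict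
concavity condition, then it admits a unique Nash equilibrium. -/
theorem dsc_implies_unique_nash {N : ℕ} {M : Fin N → ℕ} (G : ConcaveGame N M)
    (hDSC : G.DSC) : ∃! Xs : Profile N M, G.NashEq Xs := by
  obtain ⟨Xs, hXs⟩ := G.exists_globallyStable hDSC
  have hXsN : G.NashEq Xs := G.nashEq_of_globallyStable hXs
  refine ⟨Xs, hXsN, fun Y hY => ?_⟩
  have hA : ∑ i, ((Y i - Xs i) * G.V Xs i).trace.re ≤ 0 :=
    Finset.sum_nonpos fun i _ => G.var_of_nashEq hXsN i (hY.1 i)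
  have hB : ∑ i, ((Xs i - Y i) * G.V Y i).trace.re ≤ 0 :=
    Finset.sum_nonpos fun i _ => G.var_of_nashEq hY i (hXsN.1 i)
  have hD := hDSC Xs Y hXs.1 hY.1
  have hexp : ∑ i, ((Y i - Xs i) * (G.V Y i - G.V Xs i)).trace.re
      = -(∑ i, ((Xs i - Y i) * G.V Y i).trace.re)
        - ∑ i, ((Y i - Xs i) * G.V Xs i).trace.re := by
    have hpt : ∀ i, ((Y i - Xs i) * (G.V Y i - G.V Xs i)).trace.re
        = -(((Xs i - Y i) * G.V Y i).trace.re) - ((Y i - Xs i) * G.V Xs i).trace.re := by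
      intro i
      have e1 : ((Xs i - Y i) * G.V Y i).trace.re
          = -(((Y i - Xs i) * G.V Y i).trace.re) := by
        rw [← neg_sub (Y i) (Xs i), Matrix.neg_mul, Matrix.trace_neg, Complex.neg_re]
      rw [e1, Matrix.mul_sub, Matrix.trace_sub, Complex.sub_re]
      ring
    rw [Finset.sum_congr rfl fun i _ => hpt i, Finset.sum_sub_distrib,
      Finset.sum_neg_distrib]
  have h0 : ∑ i, ((Y i - Xs i) * (G.V Y i - G.V Xs i)).trace.re = 0 := by
    refine le_antisymm hD.1 ?_
    rw [hexp]
    linarith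
  exact (hD.2.mp h0).symm
end
end

section
/- For every X ∈ 𝒟 and every Hermitian matrix Y, the Fenchel coupling satisfies F(X, Y) ≥ 0, with equality if and only if X = Γ(Y). -/
open Matrix MeasureTheory Filter Topology
open scoped ComplexOrder

noncomputable section

/-- The matrix exponential `exp(A) = ∑ₖ Aᵏ/k!`. -/
noncomputable def matExp {m : ℕ} (A : Mat m) : Mat m :=
  ∑' k : ℕ, ((k.factorial : ℂ)⁻¹) • A ^ k

/-- The matrix logarithm of a Hermitian matrix, via its spectral decomposition
(junk value `0` on non-Hermitian matrices). -/
noncomputable def matLog {m : ℕ} (A : Mat m) : Mat m :=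
  if h : A.IsHermitian then
    (h.eigenvectorUnitary : Mat m) *
      Matrix.diagonal (fun i => (Real.log (h.eigenvalues i) : ℂ)) *
      star (h.eigenvectorUnitary : Mat m)
  else 0

/-- The spectrahedron `𝒟 = {X : X ⪰ 0, tr X ≤ 1}`. -/
def spectra (m : ℕ) : Set (Mat m) :=
  {X | X.PosSemidef ∧ X.trace.re ≤ 1}

/-- The modified von Neumann entropy
`h(X) = tr[X log X] + (1 − tr X) log(1 − tr X)` (the conventions `0 log 0 = 0` are built
into the spectral definition of `matLog` and into `Real.log 0 = 0`). -/
noncomputable def vnEnt {m : ℕ} (X : Mat m) : ℝ :=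
  ((X * matLog X).trace).re + (1 - X.trace.re) * Real.log (1 - X.trace.re)

/-- The convex conjugate `h*(Y) = max_{X ∈ 𝒟} {tr(YX) − h(X)}` of the modified von
Neumann entropy over the spectrahedron. -/
noncomputable def hstar {m : ℕ} (Y : Mat m) : ℝ :=
  sSup ((fun X => ((Y * X).trace).re - vnEnt X) '' spectra m)

/-- The exponential map `Γ(Y) = exp(Y)/(1 + tr(exp Y))`. -/
noncomputable def Gam {m : ℕ} (Y : Mat m) : Mat m :=
  (1 + ((matExp Y).trace).re)⁻¹ • matExp Y

/-- The Fenchel coupling `F(X, Y) = h(X) + h*(Y) − tr(YX)`. -/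
noncomputable def Fen {m : ℕ} (X Y : Mat m) : ℝ :=
  vnEnt X + hstar Y - ((Y * X).trace).re

/-! ### Auxiliary lemmas -/

section Aux

open Finset

lemma matExp_eq_exp {m : ℕ} (A : Mat m) : matExp A = NormedSpace.exp A := by
  rw [NormedSpace.exp_eq_tsum ℂ]; rfl

lemma unit_conj_exp {m : ℕ} (U : Matrix.unitaryGroup (Fin m) ℂ) (D : Mat m) :
    NormedSpace.exp ((U : Mat m) * D * star (U : Mat m))
      = (U : Mat m) * NormedSpace.exp D * star (U : Mat m) :=
  Matrix.exp_units_conj (Unitary.toUnits U) D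

lemma ofReal_rc : (RCLike.ofReal : ℝ → ℂ) = Complex.ofReal := rfl

lemma exp_diag {m : ℕ} (v : Fin m → ℝ) :
    NormedSpace.exp (Matrix.diagonal ((RCLike.ofReal ∘ v) : Fin m → ℂ))
      = Matrix.diagonal ((RCLike.ofReal ∘ Real.exp ∘ v) : Fin m → ℂ) := by
  rw [Matrix.exp_diagonal]
  have : NormedSpace.exp ((RCLike.ofReal ∘ v) : Fin m → ℂ)
      = ((RCLike.ofReal ∘ Real.exp ∘ v) : Fin m → ℂ) := by
    funext i
    rw [Pi.coe_exp]
    show NormedSpace.exp ((v i : ℂ)) = ((Real.exp (v i) : ℝ) : ℂ)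
    rw [← Complex.exp_eq_exp_ℂ, Complex.ofReal_exp]
  rw [this]

variable {m : ℕ} {A : Mat m} (hA : A.IsHermitian)

lemma matExp_cfc : matExp A = hA.cfc Real.exp := by
  rw [matExp_eq_exp, Matrix.IsHermitian.cfc]
  simp only [Unitary.conjStarAlgAut_apply, Unitary.coe_star]
  conv_lhs => rw [hA.spectral_theorem, Unitary.conjStarAlgAut_apply]
  rw [unit_conj_exp, exp_diag]

lemma matLog_eq_cfc : matLog A = hA.cfc Real.log := by
  rw [matLog, dif_pos hA, Matrix.IsHermitian.cfc]
  rfl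

lemma hcfc_mul (f g : ℝ → ℝ) :
    hA.cfc f * hA.cfc g = hA.cfc (fun x => f x * g x) := by
  rw [Matrix.IsHermitian.cfc, Matrix.IsHermitian.cfc, Matrix.IsHermitian.cfc]
  simp only [Unitary.conjStarAlgAut_apply, Unitary.coe_star]
  have h : ∀ a b c d e f : Mat m, (a * b * c) * (d * e * f) = a * (b * (c * d) * e) * f := by
    intros; simp only [mul_assoc]
  rw [h, Unitary.star_mul_self_of_mem (SetLike.coe_mem _), mul_one, diagonal_mul_diagonal]
  have : (fun i => (RCLike.ofReal ∘ f ∘ hA.eigenvalues) i * (RCLike.ofReal ∘ g ∘ hA.eigenvalues) i)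
      = ((RCLike.ofReal ∘ (fun x => f x * g x) ∘ hA.eigenvalues) : Fin m → ℂ) := by
    funext i; simp only [Function.comp_apply]; push_cast; rfl
  rw [this]

lemma hcfc_trace (f : ℝ → ℝ) :
    (hA.cfc f).trace = ∑ i, (f (hA.eigenvalues i) : ℂ) := by
  rw [Matrix.IsHermitian.cfc]
  simp only [Unitary.conjStarAlgAut_apply, Unitary.coe_star]
  rw [Matrix.trace_mul_cycle,
    Unitary.star_mul_self_of_mem (SetLike.coe_mem _), one_mul, trace_diagonal]
  rfl

lemma hcfc_trace_re (f : ℝ → ℝ) :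
    ((hA.cfc f).trace).re = ∑ i, f (hA.eigenvalues i) := by
  rw [hcfc_trace hA, Complex.re_sum]
  exact Finset.sum_congr rfl fun i _ => Complex.ofReal_re _

lemma hcfc_fun_id : hA.cfc (fun x => x) = A := by
  rw [Matrix.IsHermitian.cfc]
  exact hA.spectral_theorem.symm

lemma hcfc_isHermitian (f : ℝ → ℝ) : (hA.cfc f).IsHermitian := by
  rw [Matrix.IsHermitian.cfc]
  simp only [Unitary.conjStarAlgAut_apply, Unitary.coe_star]
  rw [Matrix.star_eq_conjTranspose]
  exact Matrix.isHermitian_mul_mul_conjTranspose _ <|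
    Matrix.isHermitian_diagonal_of_self_adjoint _ <| funext fun i => by
      simp [Pi.star_def, Function.comp_apply, ← Complex.ofReal_def]

lemma hcfc_posSemidef (f : ℝ → ℝ) (hf : ∀ x, 0 ≤ f x) : (hA.cfc f).PosSemidef := by
  rw [Matrix.IsHermitian.cfc]
  simp only [Unitary.conjStarAlgAut_apply, Unitary.coe_star]
  rw [Matrix.star_eq_conjTranspose]
  refine Matrix.PosSemidef.mul_mul_conjTranspose_same ?_ _
  refine Matrix.posSemidef_diagonal_iff.mpr fun i => ?_
  rw [Function.comp_apply, Function.comp_apply, ofReal_rc]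
  exact Complex.zero_le_real.mpr (hf _)

lemma hcfc_smul (c : ℝ) (f : ℝ → ℝ) : c • hA.cfc f = hA.cfc (fun x => c * f x) := by
  rw [Matrix.IsHermitian.cfc, Matrix.IsHermitian.cfc]
  simp only [Unitary.conjStarAlgAut_apply, Unitary.coe_star]
  rw [← smul_mul_assoc, ← mul_smul_comm,
    ← Matrix.diagonal_smul]
  have : c • ((RCLike.ofReal ∘ f ∘ hA.eigenvalues) : Fin m → ℂ)
      = ((RCLike.ofReal ∘ (fun x => c * f x) ∘ hA.eigenvalues) : Fin m → ℂ) := by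
    funext i
    simp only [Pi.smul_apply, Function.comp_apply]
    push_cast [Complex.real_smul]
    rfl
  rw [this]

lemma matLog_hcfc (g : ℝ → ℝ) (hgc : Continuous g) (hgpos : ∀ x, 0 < g x) :
    matLog (hA.cfc g) = hA.cfc fun x => Real.log (g x) := by
  have hherm : (hA.cfc g).IsHermitian := hcfc_isHermitian hA g
  have hsa : IsSelfAdjoint A := hA
  rw [matLog_eq_cfc hherm, ← hherm.cfc_eq, ← hA.cfc_eq g,
    ← cfc_comp Real.log g A hsa
      (by
        intro x hx
        obtain ⟨r, -, rfl⟩ := hx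
        exact (Real.continuousAt_log (hgpos r).ne').continuousWithinAt)
      hgc.continuousOn,
    hA.cfc_eq]
  rfl

lemma phi_lemma {a b : ℝ} (ha : 0 ≤ a) (hb : 0 < b) :
    0 ≤ a * Real.log a - a * Real.log b - a + b ∧
      (a * Real.log a - a * Real.log b - a + b = 0 ↔ a = b) := by
  rcases eq_or_lt_of_le ha with h0 | hpos
  · obtain rfl : a = 0 := h0.symm
    constructor
    · simpa using hb.le
    · simp [hb.ne', hb.ne]
  · have hba : 0 < b / a := div_pos hb hpos
    have hphi : a * Real.log a - a * Real.log b - a + b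
        = a * ((b / a - 1) - Real.log (b / a)) := by
      rw [Real.log_div hb.ne' hpos.ne']
      field_simp
      ring
    have hlog : Real.log (b / a) ≤ b / a - 1 := Real.log_le_sub_one_of_pos hba
    constructor
    · rw [hphi]; exact mul_nonneg hpos.le (by linarith)
    · rw [hphi]
      constructor
      · intro h
        by_contra hne
        have hne' : b / a ≠ 1 := by
          intro h1
          exact hne ((div_eq_one_iff_eq hpos.ne').mp h1).symm
        have := Real.log_lt_sub_one_of_pos hba hne'
        nlinarith
      · intro h
        subst h
        simp [div_self hpos.ne']

lemma trace_conj_step (Y U D : Mat m) :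
    (Y * (U * D * star U)).trace = ((star U * Y * U) * D).trace := by
  rw [show Y * (U * D * star U) = ((Y * U) * D) * star U by simp only [mul_assoc],
    Matrix.trace_mul_cycle]
  simp only [mul_assoc]

lemma conj_conj (U V D : Mat m) :
    star U * (V * D * star V) * U = (star U * V) * D * star (star U * V) := by
  simp only [StarMul.star_mul, star_star, mul_assoc]

lemma trace_WDWD (W : Mat m) (d e : Fin m → ℂ) :
    ((W * Matrix.diagonal e * star W) * Matrix.diagonal d).trace
      = ∑ i, ∑ j, d i * e j * (W i j * star (W i j)) := by
  rw [Matrix.trace]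
  refine Finset.sum_congr rfl fun i _ => ?_
  rw [Matrix.diag_apply, Matrix.mul_diagonal]
  rw [show W * Matrix.diagonal e * star W = W * (Matrix.diagonal e * star W) by
    simp only [mul_assoc]]
  rw [Matrix.mul_apply, Finset.sum_mul]
  refine Finset.sum_congr rfl fun j _ => ?_
  rw [Matrix.diagonal_mul]
  simp only [Matrix.star_eq_conjTranspose, Matrix.conjTranspose_apply]
  ring

end Aux

section GammaLemmas
variable {m : ℕ}

lemma matExp_trace_re (Y : Mat m) (hY : Y.IsHermitian) :
    ((matExp Y).trace).re = ∑ j, Real.exp (hY.eigenvalues j) := by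
  rw [matExp_cfc hY]; exact hcfc_trace_re hY _

lemma Zpos (Y : Mat m) (hY : Y.IsHermitian) : 0 < 1 + ((matExp Y).trace).re := by
  rw [matExp_trace_re Y hY]
  have : 0 ≤ ∑ j, Real.exp (hY.eigenvalues j) :=
    Finset.sum_nonneg fun j _ => (Real.exp_pos _).le
  linarith

lemma Zge1 (Y : Mat m) (hY : Y.IsHermitian) : 1 ≤ 1 + ((matExp Y).trace).re := by
  rw [matExp_trace_re Y hY]
  have : 0 ≤ ∑ j, Real.exp (hY.eigenvalues j) :=
    Finset.sum_nonneg fun j _ => (Real.exp_pos _).le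
  linarith

lemma gam_cfc (Y : Mat m) (hY : Y.IsHermitian) :
    Gam Y = hY.cfc (fun r => (1 + ((matExp Y).trace).re)⁻¹ * Real.exp r) := by
  rw [Gam]
  generalize (1 + ((matExp Y).trace).re) = c
  rw [matExp_cfc hY, hcfc_smul]

lemma trace_mul_cfc {A : Mat m} (hA : A.IsHermitian) (f : ℝ → ℝ) :
    ((A * hA.cfc f).trace).re = ∑ i, hA.eigenvalues i * f (hA.eigenvalues i) := by
  have h : A * hA.cfc f = hA.cfc (fun x => x * f x) := by
    calc A * hA.cfc f = hA.cfc (fun x => x) * hA.cfc f := by rw [hcfc_fun_id hA]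
      _ = hA.cfc (fun x => x * f x) := hcfc_mul hA _ _
  rw [h, hcfc_trace_re]

lemma gam_mem (Y : Mat m) (hY : Y.IsHermitian) : Gam Y ∈ spectra m := by
  have hZ := Zpos Y hY
  constructor
  · rw [gam_cfc Y hY]
    exact hcfc_posSemidef hY _ fun x => by positivity
  · show ((Gam Y).trace).re ≤ 1
    rw [gam_cfc Y hY, hcfc_trace_re, ← Finset.mul_sum]
    rw [inv_mul_le_iff₀ hZ, mul_one, ← matExp_trace_re Y hY]
    linarith

lemma gam_g_eq (Y : Mat m) (hY : Y.IsHermitian) :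
    ((Y * Gam Y).trace).re - vnEnt (Gam Y) = Real.log (1 + ((matExp Y).trace).re) := by
  have hZ := Zpos Y hY
  set Z : ℝ := 1 + ((matExp Y).trace).re with hZdef
  set y : Fin m → ℝ := hY.eigenvalues with hydef
  set g : ℝ → ℝ := fun r => Z⁻¹ * Real.exp r with hgdef
  have hgc : Continuous g := by fun_prop
  have hgpos : ∀ x, 0 < g x := fun x => by positivity
  have hlogg : ∀ r : ℝ, Real.log (g r) = r - Real.log Z := by
    intro r
    rw [hgdef]
    rw [Real.log_mul (inv_ne_zero hZ.ne') (Real.exp_pos _).ne', Real.log_inv, Real.log_exp]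
    ring
  have htr : ((Y * Gam Y).trace).re = ∑ j, y j * g (y j) := by
    rw [gam_cfc Y hY]; exact trace_mul_cfc hY _
  have hlog : matLog (Gam Y) = hY.cfc fun r => Real.log (g r) := by
    rw [gam_cfc Y hY]
    exact matLog_hcfc hY g hgc hgpos
  have hmul : Gam Y * matLog (Gam Y) = hY.cfc (fun r => g r * Real.log (g r)) := by
    rw [hlog, gam_cfc Y hY, hcfc_mul]
  have htrg : ((Gam Y).trace).re = Z⁻¹ * ∑ j, Real.exp (y j) := by
    rw [gam_cfc Y hY, hcfc_trace_re, ← Finset.mul_sum]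
  have hZt : Z = 1 + ∑ j, Real.exp (y j) := by rw [hZdef, matExp_trace_re Y hY]
  have h1s : 1 - ((Gam Y).trace).re = Z⁻¹ := by
    rw [htrg]
    field_simp
    linarith [hZt]
  rw [vnEnt, hmul, hcfc_trace_re, htr, h1s]
  have hsum : ∀ j, g (y j) * Real.log (g (y j)) = g (y j) * y j - Real.log Z * g (y j) := by
    intro j; rw [hlogg]; ring
  rw [Finset.sum_congr rfl fun j _ => hsum j, Finset.sum_sub_distrib, ← Finset.mul_sum]
  have hgg : ∑ j, g (y j) = Z⁻¹ * ∑ j, Real.exp (y j) := by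
    rw [hgdef, ← Finset.mul_sum]
  have hyy : ∑ j, y j * g (y j) = ∑ j, g (y j) * y j :=
    Finset.sum_congr rfl fun j _ => by ring
  rw [hyy, hgg, Real.log_inv]
  have hinv : Z⁻¹ * (∑ j, Real.exp (y j)) + Z⁻¹ = 1 := by
    have : Z⁻¹ * (∑ j, Real.exp (y j)) + Z⁻¹ = Z⁻¹ * Z := by rw [hZt]; ring
    rw [this, inv_mul_cancel₀ hZ.ne']
  linear_combination Real.log Z * hinv

end GammaLemmas

section Gibbs
variable {m : ℕ}

lemma gibbs (Y : Mat m) (hY : Y.IsHermitian) (X : Mat m) (hX : X ∈ spectra m) :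
    ((Y * X).trace).re - vnEnt X ≤ Real.log (1 + ((matExp Y).trace).re) ∧
      (((Y * X).trace).re - vnEnt X = Real.log (1 + ((matExp Y).trace).re) ↔ X = Gam Y) := by
  obtain ⟨hXpsd, hXtr⟩ := hX
  have hXh : X.IsHermitian := hXpsd.1
  have hZ := Zpos Y hY
  set Z : ℝ := 1 + ((matExp Y).trace).re with hZdef
  set x : Fin m → ℝ := hXh.eigenvalues with hxdef
  set y : Fin m → ℝ := hY.eigenvalues with hydef
  have hx : ∀ i, 0 ≤ x i := hXpsd.eigenvalues_nonneg
  set b : Fin m → ℝ := fun j => Z⁻¹ * Real.exp (y j) with hbdef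
  have hb : ∀ j, 0 < b j := fun j => by positivity
  have hlogb : ∀ j, Real.log (b j) = y j - Real.log Z := by
    intro j
    rw [hbdef, Real.log_mul (inv_ne_zero hZ.ne') (Real.exp_pos _).ne', Real.log_inv, Real.log_exp]
    ring
  set U : Mat m := (hXh.eigenvectorUnitary : Mat m) with hUdef
  set V : Mat m := (hY.eigenvectorUnitary : Mat m) with hVdef
  set W : Mat m := star U * V with hWdef
  have hWmem : W ∈ unitary (Mat m) :=
    mul_mem (Unitary.star_mem (SetLike.coe_mem _)) (SetLike.coe_mem _)
  set p : Fin m → Fin m → ℝ := fun i j => Complex.normSq (W i j) with hpdef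
  have hppos : ∀ i j, 0 ≤ p i j := fun i j => Complex.normSq_nonneg _
  -- row and column sums
  have hWr : ∀ i, ∑ j, p i j = 1 := by
    intro i
    have h : (W * star W) i i = (1 : Mat m) i i := by
      rw [Unitary.mul_star_self_of_mem hWmem]
    rw [Matrix.mul_apply, Matrix.one_apply_eq] at h
    have h2 : ∑ j, (Complex.normSq (W i j) : ℂ) = 1 := by
      rw [← h]
      refine Finset.sum_congr rfl fun j _ => ?_
      rw [Matrix.star_eq_conjTranspose, Matrix.conjTranspose_apply, ← Complex.mul_conj]
      rfl
    have h3 := congrArg Complex.re h2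
    rw [Complex.re_sum, Complex.one_re] at h3
    rw [← h3]
    exact Finset.sum_congr rfl fun j _ => (Complex.ofReal_re _).symm
  have hWc : ∀ j, ∑ i, p i j = 1 := by
    intro j
    have h : (star W * W) j j = (1 : Mat m) j j := by
      rw [Unitary.star_mul_self_of_mem hWmem]
    rw [Matrix.mul_apply, Matrix.one_apply_eq] at h
    have h2 : ∑ i, (Complex.normSq (W i j) : ℂ) = 1 := by
      rw [← h]
      refine Finset.sum_congr rfl fun i _ => ?_
      rw [Matrix.star_eq_conjTranspose, Matrix.conjTranspose_apply, mul_comm, ← Complex.mul_conj]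
      rfl
    have h3 := congrArg Complex.re h2
    rw [Complex.re_sum, Complex.one_re] at h3
    rw [← h3]
    exact Finset.sum_congr rfl fun i _ => (Complex.ofReal_re _).symm
  -- trace of Y*X
  have htr : ((Y * X).trace).re = ∑ i, ∑ j, x i * y j * p i j := by
    have hc : (Y * X).trace
        = ((W * Matrix.diagonal ((RCLike.ofReal ∘ y) : Fin m → ℂ) * star W)
            * Matrix.diagonal ((RCLike.ofReal ∘ x) : Fin m → ℂ)).trace := by
      conv_lhs => rw [hXh.spectral_theorem, Unitary.conjStarAlgAut_apply]
      rw [trace_conj_step]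
      conv_lhs => rw [hY.spectral_theorem, Unitary.conjStarAlgAut_apply]
      rw [← hUdef, ← hVdef, conj_conj, ← hWdef]
    rw [hc, trace_WDWD, Complex.re_sum]
    refine Finset.sum_congr rfl fun i _ => ?_
    rw [Complex.re_sum]
    refine Finset.sum_congr rfl fun j _ => ?_
    rw [show star (W i j) = (starRingEnd ℂ) (W i j) from rfl, Complex.mul_conj]
    have : ((RCLike.ofReal ∘ x) i : ℂ) * ((RCLike.ofReal ∘ y) j) * (Complex.normSq (W i j) : ℂ)
        = ((x i * y j * p i j : ℝ) : ℂ) := by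
      rw [hpdef]; push_cast; rfl
    rw [this, Complex.ofReal_re]
  -- trace and entropy of X
  have hs : X.trace.re = ∑ i, x i := by
    conv_lhs => rw [← hcfc_fun_id hXh]
    exact hcfc_trace_re hXh _
  set s : ℝ := ∑ i, x i with hsdef
  have hs1 : s ≤ 1 := by rw [← hs]; exact hXtr
  have hvn : vnEnt X = (∑ i, x i * Real.log (x i)) + (1 - s) * Real.log (1 - s) := by
    rw [vnEnt, hs, matLog_eq_cfc hXh, trace_mul_cfc hXh]
  -- the key identity
  have key : Real.log Z - (((Y * X).trace).re - vnEnt X)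
      = (∑ i, ∑ j, p i j * (x i * Real.log (x i) - x i * Real.log (b j) - x i + b j))
        + ((1 - s) * Real.log (1 - s) - (1 - s) * Real.log Z⁻¹ - (1 - s) + Z⁻¹) := by
    have hsplit : ∀ i, ∑ j, p i j * (x i * Real.log (x i) - x i * Real.log (b j) - x i + b j)
        = x i * Real.log (x i) - (∑ j, x i * y j * p i j) + Real.log Z * x i - x i
          + ∑ j, b j * p i j := by
      intro i
      have hterm : ∀ j, p i j * (x i * Real.log (x i) - x i * Real.log (b j) - x i + b j)
          = x i * Real.log (x i) * p i j - x i * y j * p i j + Real.log Z * (x i * p i j)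
            - x i * p i j + b j * p i j := by
        intro j; rw [hlogb j]; ring
      rw [Finset.sum_congr rfl fun j _ => hterm j]
      simp only [Finset.sum_add_distrib, Finset.sum_sub_distrib]
      have e1 : ∑ j, x i * Real.log (x i) * p i j = x i * Real.log (x i) := by
        rw [← Finset.mul_sum, hWr i, mul_one]
      have e2 : ∑ j, Real.log Z * (x i * p i j) = Real.log Z * x i := by
        rw [← Finset.mul_sum, ← Finset.mul_sum, hWr i, mul_one]
      have e3 : ∑ j, x i * p i j = x i := by
        rw [← Finset.mul_sum, hWr i, mul_one]
      rw [e1, e2, e3]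
    rw [Finset.sum_congr rfl fun i _ => hsplit i]
    simp only [Finset.sum_add_distrib, Finset.sum_sub_distrib]
    have f1 : ∑ i, Real.log Z * x i = Real.log Z * s := by
      rw [hsdef, Finset.mul_sum]
    have f2 : ∑ i, ∑ j, b j * p i j = ∑ j, b j := by
      rw [Finset.sum_comm]
      refine Finset.sum_congr rfl fun j _ => ?_
      rw [← Finset.mul_sum, hWc j, mul_one]
    rw [f1, f2, hvn, htr, Real.log_inv]
    have hsumb : (∑ j, b j) + Z⁻¹ = 1 := by
      have hZt : Z = 1 + ∑ j, Real.exp (y j) := by rw [hZdef, matExp_trace_re Y hY]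
      have : (∑ j, b j) + Z⁻¹ = Z⁻¹ * Z := by
        rw [hbdef, ← Finset.mul_sum, hZt]; ring
      rw [this, inv_mul_cancel₀ hZ.ne']
    linear_combination -hsumb
  -- nonnegativity of all terms
  have hterm_nonneg : ∀ i j, 0 ≤ p i j * (x i * Real.log (x i) - x i * Real.log (b j) - x i + b j) :=
    fun i j => mul_nonneg (hppos i j) (phi_lemma (hx i) (hb j)).1
  have hscalar_nonneg : 0 ≤ (1 - s) * Real.log (1 - s) - (1 - s) * Real.log Z⁻¹ - (1 - s) + Z⁻¹ :=
    (phi_lemma (by linarith : (0:ℝ) ≤ 1 - s) (inv_pos.mpr hZ)).1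
  have hdsum_nonneg : 0 ≤ ∑ i, ∑ j, p i j * (x i * Real.log (x i) - x i * Real.log (b j) - x i + b j) :=
    Finset.sum_nonneg fun i _ => Finset.sum_nonneg fun j _ => hterm_nonneg i j
  refine ⟨by linarith [key, hdsum_nonneg, hscalar_nonneg], ?_, ?_⟩
  · -- equality implies X = Gam Y
    intro heq
    have hzero : (∑ i, ∑ j, p i j * (x i * Real.log (x i) - x i * Real.log (b j) - x i + b j))
        + ((1 - s) * Real.log (1 - s) - (1 - s) * Real.log Z⁻¹ - (1 - s) + Z⁻¹) = 0 := by
      rw [← key]; linarith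
    have hd0 : (∑ i, ∑ j, p i j * (x i * Real.log (x i) - x i * Real.log (b j) - x i + b j)) = 0 := by
      linarith
    have hij : ∀ i j, p i j * (x i * Real.log (x i) - x i * Real.log (b j) - x i + b j) = 0 := by
      intro i j
      have h1 := (Finset.sum_eq_zero_iff_of_nonneg
        (fun i _ => Finset.sum_nonneg fun j _ => hterm_nonneg i j)).mp hd0 i (Finset.mem_univ i)
      exact (Finset.sum_eq_zero_iff_of_nonneg
        (fun j _ => hterm_nonneg i j)).mp h1 j (Finset.mem_univ j)
    have hWeq : ∀ i j, ((x i : ℂ)) * W i j = W i j * ((b j : ℂ)) := by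
      intro i j
      rcases mul_eq_zero.mp (hij i j) with h | h
      · have hW0 : W i j = 0 := Complex.normSq_eq_zero.mp h
        rw [hW0, mul_zero, zero_mul]
      · have hxb : x i = b j := (phi_lemma (hx i) (hb j)).2.mp h
        rw [hxb, mul_comm]
    have hDW : Matrix.diagonal ((RCLike.ofReal ∘ x) : Fin m → ℂ) * W
        = W * Matrix.diagonal ((RCLike.ofReal ∘ b) : Fin m → ℂ) := by
      ext i j
      rw [Matrix.diagonal_mul, Matrix.mul_diagonal]
      exact hWeq i j
    have hUU : U * star U = 1 := Unitary.mul_star_self_of_mem (SetLike.coe_mem _)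
    have hVV : V * star V = 1 := Unitary.mul_star_self_of_mem (SetLike.coe_mem _)
    have step1 : U * (Matrix.diagonal ((RCLike.ofReal ∘ x) : Fin m → ℂ) * W) * star V = X := by
      have hassoc : U * (Matrix.diagonal ((RCLike.ofReal ∘ x) : Fin m → ℂ) * (star U * V)) * star V
          = (U * Matrix.diagonal ((RCLike.ofReal ∘ x) : Fin m → ℂ) * star U) * (V * star V) := by
        simp only [mul_assoc]
      rw [hWdef, hassoc, hVV, mul_one]
      conv_rhs => rw [hXh.spectral_theorem, Unitary.conjStarAlgAut_apply]
    have step2 : U * (W * Matrix.diagonal ((RCLike.ofReal ∘ b) : Fin m → ℂ)) * star V = Gam Y := by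
      have hassoc : U * ((star U * V) * Matrix.diagonal ((RCLike.ofReal ∘ b) : Fin m → ℂ)) * star V
          = (U * star U) * (V * Matrix.diagonal ((RCLike.ofReal ∘ b) : Fin m → ℂ) * star V) := by
        simp only [mul_assoc]
      rw [hWdef, hassoc, hUU, one_mul, gam_cfc Y hY, Matrix.IsHermitian.cfc]
      rfl
    calc X = U * (Matrix.diagonal ((RCLike.ofReal ∘ x) : Fin m → ℂ) * W) * star V := step1.symm
      _ = U * (W * Matrix.diagonal ((RCLike.ofReal ∘ b) : Fin m → ℂ)) * star V := by rw [hDW]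
      _ = Gam Y := step2
  · intro h
    rw [h]
    exact gam_g_eq Y hY

end Gibbs

section Hstar
variable {m : ℕ}

lemma hstar_eq (Y : Mat m) (hY : Y.IsHermitian) :
    hstar Y = Real.log (1 + ((matExp Y).trace).re) := by
  rw [hstar]
  have hub : ∀ r ∈ (fun X => ((Y * X).trace).re - vnEnt X) '' spectra m,
      r ≤ Real.log (1 + ((matExp Y).trace).re) := by
    rintro r ⟨X, hX, rfl⟩
    exact (gibbs Y hY X hX).1
  have hmem : Real.log (1 + ((matExp Y).trace).re)
      ∈ (fun X => ((Y * X).trace).re - vnEnt X) '' spectra m :=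
    ⟨Gam Y, gam_mem Y hY, gam_g_eq Y hY⟩
  exact le_antisymm (Real.sSup_le hub (Real.log_nonneg (Zge1 Y hY)))
    (le_csSup ⟨_, hub⟩ hmem)

end Hstar

/-- For every `X ∈ 𝒟` and every Hermitian matrix `Y`, the Fenchel
coupling satisfies `F(X, Y) ≥ 0`, with equality if and only if `X = Γ(Y)`. -/
theorem fenchel_coupling_nonneg {m : ℕ} (X : Mat m) (hX : X ∈ spectra m)
    (Y : Mat m) (hY : Y.IsHermitian) :
    0 ≤ Fen X Y ∧ (Fen X Y = 0 ↔ X = Gam Y) := by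
  have hge := gibbs Y hY X hX
  rw [Fen, hstar_eq Y hY]
  constructor
  · linarith [hge.1]
  · constructor
    · intro h
      exact hge.2.mp (by linarith)
    · intro h
      have := hge.2.mpr h
      linarith
end
end

section
/- Fix real constants P_c > 0 and P_max > 0 and a complex matrix H̃ ∈ ℂ^{N×M}. Then the energy-efficiency utility u(X) = [(P_c + (1 − tr X) P_max) / (P_c (P_c + P_max))] · log det( I + (P_c P_max / (P_c + (1 − tr X) P_max)) · H̃ X H̃† ) is a concave function of X on the spectrahedron {X ∈ ℂ^{M×M} : X ⪰ 0, tr X ≤ 1}. -/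
open Matrix
open scoped ComplexOrder
noncomputable section
set_option linter.unusedSectionVars false
variable {k : Type*} [Fintype k] [DecidableEq k]

lemma real_smul_matrix (r : ℝ) (M : Matrix k k ℂ) : r • M = (r : ℂ) • M := by
  ext i j; simp [Complex.real_smul]

lemma Matrix.PosSemidef.rsmul {M : Matrix k k ℂ} (hM : M.PosSemidef) {r : ℝ} (hr : 0 ≤ r) :
    (r • M).PosSemidef := by
  refine ⟨?_, fun x => ?_⟩
  · have := hM.isHermitian
    unfold Matrix.IsHermitian at *
    rw [conjTranspose_smul, star_trivial, this]
  · have h0 := hM.2 x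
    have h1 := (hM.smul (a := (r:ℂ)) (Complex.zero_le_real.mpr hr)).2 x
    have e := real_smul_matrix r M
    simp only [e]; exact h1

lemma Matrix.PosDef.rsmul {M : Matrix k k ℂ} (hM : M.PosDef) {r : ℝ} (hr : 0 < r) :
    (r • M).PosDef := by
  refine ⟨(hM.posSemidef.rsmul hr.le).isHermitian, fun x hx => ?_⟩
  have h0 := (hM.smul (a := (r:ℂ)) (Complex.zero_lt_real.mpr hr)).2 hx
  have e := real_smul_matrix r M
  simp only [e]; exact h0

lemma Matrix.PosDef.det_re_pos {M : Matrix k k ℂ} (hM : M.PosDef) : 0 < M.det.re :=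
  (Complex.lt_def.mp hM.det_pos).1

lemma Matrix.PosDef.det_eq_re {M : Matrix k k ℂ} (hM : M.PosDef) : M.det = (M.det.re : ℂ) := by
  have h := (Complex.lt_def.mp hM.det_pos).2
  exact Complex.ext rfl (by simpa using h.symm)

lemma det_rsmul_re (r : ℝ) (M : Matrix k k ℂ) :
    ((r • M).det).re = r ^ (Fintype.card k) * M.det.re := by
  rw [real_smul_matrix, det_smul]
  rw [show ((r:ℂ))^(Fintype.card k) = ((r ^ (Fintype.card k) : ℝ) : ℂ) by push_cast; ring, Complex.re_ofReal_mul]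
variable {k : Type*} [Fintype k] [DecidableEq k]

lemma det_smul_one_add_smul {C : Matrix k k ℂ} (hC : C.IsHermitian) (α β : ℝ) :
    (α • (1 : Matrix k k ℂ) + β • C).det
      = ∏ i, ((α + β * hC.eigenvalues i : ℝ) : ℂ) := by
  set U : Matrix k k ℂ := (hC.eigenvectorUnitary : Matrix k k ℂ) with hUdef
  have hU : U * star U = 1 := (Matrix.mem_unitaryGroup_iff).mp hC.eigenvectorUnitary.2
  have key : α • (1 : Matrix k k ℂ) + β • C
      = U * (α • (1 : Matrix k k ℂ) + β • diagonal (RCLike.ofReal ∘ hC.eigenvalues)) * star U := by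
    conv_lhs => rw [hC.spectral_theorem]
    rw [Matrix.mul_add, Matrix.add_mul, Matrix.mul_smul, Matrix.smul_mul, Matrix.mul_smul,
      Matrix.smul_mul, Matrix.mul_one, hU, Unitary.conjStarAlgAut_apply]
  rw [key, det_mul_right_comm, hU, one_mul]
  have : α • (1 : Matrix k k ℂ) + β • diagonal (RCLike.ofReal ∘ hC.eigenvalues)
      = diagonal (fun i => ((α + β * hC.eigenvalues i : ℝ) : ℂ)) := by
    ext i j
    by_cases h : i = j
    · subst h
      simp only [Matrix.add_apply, Matrix.smul_apply, Matrix.one_apply_eq,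
        diagonal_apply_eq, Function.comp_apply, Complex.real_smul]
      norm_num
    · simp [diagonal_apply_ne _ h, Matrix.one_apply_ne h]
  rw [this, det_diagonal]

lemma log_affine_ineq {α β lam : ℝ} (ha : 0 ≤ α) (hb : 0 ≤ β) (hab : α + β = 1)
    (hl : 0 < lam) : β * Real.log lam ≤ Real.log (α + β * lam) := by
  have h := strictConcaveOn_log_Ioi.concaveOn.2 (Set.mem_Ioi.mpr one_pos)
    (Set.mem_Ioi.mpr hl) ha hb hab
  simpa [smul_eq_mul, Real.log_one] using h

open scoped MatrixOrder in
lemma logdet_concave_core {A B : Matrix k k ℂ} (hA : A.PosDef) (hB : B.PosDef)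
    {α β : ℝ} (ha : 0 ≤ α) (hb : 0 ≤ β) (hab : α + β = 1) :
    α * Real.log A.det.re + β * Real.log B.det.re
      ≤ Real.log ((α • A + β • B).det.re) := by
  rcases eq_or_lt_of_le ha with h0 | hα
  · have hβ : β = 1 := by linarith
    simp [← h0, hβ]
  rcases eq_or_lt_of_le hb with h0 | hβ
  · have hα1 : α = 1 := by linarith
    simp [← h0, hα1]
  -- set up square root of A
  set S := CFC.sqrt A with hSdef
  have hS : S.PosSemidef := (CFC.sqrt_nonneg A).posSemidef
  have hSS : S * S = A := CFC.sqrt_mul_sqrt_self A hA.posSemidef.nonneg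
  have hdetA : A.det ≠ 0 := hA.det_pos.ne'
  have hdetS2 : S.det * S.det = A.det := by rw [← det_mul, hSS]
  have hdetS : S.det ≠ 0 := by
    intro h; rw [h, mul_zero] at hdetS2; exact hdetA hdetS2.symm
  have hSunit : IsUnit S.det := hdetS.isUnit
  have hSinv : S * S⁻¹ = 1 := Matrix.mul_nonsing_inv S hSunit
  have hSinv' : S⁻¹ * S = 1 := Matrix.nonsing_inv_mul S hSunit
  set C := S⁻¹ * B * S⁻¹ with hCdef
  have hSinvHerm : (S⁻¹)ᴴ = S⁻¹ := (hS.isHermitian.inv).eq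
  have hCpsd : C.PosSemidef := by
    have := hB.posSemidef.mul_mul_conjTranspose_same S⁻¹
    rwa [hSinvHerm] at this
  have hCherm : C.IsHermitian := hCpsd.isHermitian
  -- key congruence identity
  have key : α • A + β • B = S * (α • (1 : Matrix k k ℂ) + β • C) * S := by
    rw [Matrix.mul_add, Matrix.add_mul, Matrix.mul_smul, Matrix.smul_mul, Matrix.mul_smul,
      Matrix.smul_mul, Matrix.mul_one, hSS, hCdef]
    congr 1
    rw [← Matrix.mul_assoc, ← Matrix.mul_assoc, hSinv, Matrix.one_mul, Matrix.mul_assoc, hSinv',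
      Matrix.mul_one]
  -- determinants
  have hdetC : C.det = B.det / A.det := by
    rw [hCdef, det_mul, det_mul, Matrix.det_nonsing_inv, Ring.inverse_eq_inv]
    field_simp [hdetA, ← hdetS2]
    rw [← hdetS2]; ring
  set lam := hCherm.eigenvalues with hlam
  have hprod : C.det = ∏ i, (lam i : ℂ) := hCherm.det_eq_prod_eigenvalues
  have hdA : A.det = (A.det.re : ℂ) := hA.det_eq_re
  have hdB : B.det = (B.det.re : ℂ) := hB.det_eq_re
  have hdApos : 0 < A.det.re := hA.det_re_pos
  have hdBpos : 0 < B.det.re := hB.det_re_pos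
  have hprodR : ∏ i, lam i = B.det.re / A.det.re := by
    have h1 : ((∏ i, lam i : ℝ) : ℂ) = C.det := by
      rw [hprod, Complex.ofReal_prod]
    have h2 : C.det = ((B.det.re / A.det.re : ℝ) : ℂ) := by
      rw [hdetC]; push_cast
      rw [← hdA, ← hdB]
    exact_mod_cast h1.trans h2
  have hlamnn : ∀ i, 0 ≤ lam i := hCpsd.eigenvalues_nonneg
  have hprodpos : 0 < ∏ i, lam i := by
    rw [hprodR]; positivity
  have hlampos : ∀ i, 0 < lam i := by
    intro i
    rcases (hlamnn i).eq_or_lt with h | h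
    · exfalso
      have : (∏ j, lam j) = 0 := Finset.prod_eq_zero (Finset.mem_univ i) h.symm
      rw [this] at hprodpos; exact lt_irrefl 0 hprodpos
    · exact h
  -- determinant of the combination
  have hdet_comb : ((α • A + β • B).det).re = A.det.re * ∏ i, (α + β * lam i) := by
    rw [key, det_mul_right_comm, hSS, det_mul, det_smul_one_add_smul hCherm α β,
      ← Complex.ofReal_prod, hdA, ← Complex.ofReal_mul, Complex.ofReal_re]
    simp [hlam]
  -- final chain of inequalities
  have hfacpos : 0 < ∏ i, (α + β * lam i) :=
    Finset.prod_pos fun i _ => by nlinarith [hlampos i]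
  rw [hdet_comb, Real.log_mul hdApos.ne' hfacpos.ne',
    Real.log_prod (fun i _ => by have := hlampos i; positivity)]
  have hsum : ∑ i, β * Real.log (lam i) ≤ ∑ i, Real.log (α + β * lam i) :=
    Finset.sum_le_sum fun i _ => log_affine_ineq ha hb hab (hlampos i)
  have hlog : ∑ i, β * Real.log (lam i) = β * (Real.log B.det.re - Real.log A.det.re) := by
    rw [← Finset.mul_sum, ← Real.log_prod (fun i _ => (hlampos i).ne'), hprodR,
      Real.log_div hdBpos.ne' hdApos.ne']
  have hα1 : α = 1 - β := by linarith
  subst hα1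
  linarith [hsum, hlog]

lemma perspective_logdet {M₁ M₂ : Matrix k k ℂ} (h₁ : M₁.PosDef) (h₂ : M₂.PosDef)
    {t₁ t₂ α β : ℝ} (ht₁ : 0 < t₁) (ht₂ : 0 < t₂)
    (ha : 0 ≤ α) (hb : 0 ≤ β) (hab : α + β = 1) :
    α * (t₁ * Real.log (M₁.det.re / t₁ ^ (Fintype.card k)))
      + β * (t₂ * Real.log (M₂.det.re / t₂ ^ (Fintype.card k)))
      ≤ (α * t₁ + β * t₂) *
        Real.log ((α • M₁ + β • M₂).det.re / (α * t₁ + β * t₂) ^ (Fintype.card k)) := by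
  set N := Fintype.card k
  set t := α * t₁ + β * t₂ with htdef
  have ht : 0 < t := by
    rw [htdef]
    rcases eq_or_lt_of_le ha with h | h
    · nlinarith
    · nlinarith [mul_pos h ht₁, mul_nonneg hb ht₂.le]
  set a' := α * t₁ / t with ha'def
  set b' := β * t₂ / t with hb'def
  have ha' : 0 ≤ a' := by positivity
  have hb' : 0 ≤ b' := by positivity
  have hab' : a' + b' = 1 := by
    rw [ha'def, hb'def, ← add_div, htdef, div_self ht.ne']
  have hA : (t₁⁻¹ • M₁).PosDef := h₁.rsmul (by positivity)
  have hB : (t₂⁻¹ • M₂).PosDef := h₂.rsmul (by positivity)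
  have hcomb : a' • (t₁⁻¹ • M₁) + b' • (t₂⁻¹ • M₂) = t⁻¹ • (α • M₁ + β • M₂) := by
    have c1 : a' * t₁⁻¹ = t⁻¹ * α := by
      rw [ha'def, div_mul_eq_mul_div, mul_assoc, mul_inv_cancel₀ ht₁.ne', mul_one,
        div_eq_inv_mul]
    have c2 : b' * t₂⁻¹ = t⁻¹ * β := by
      rw [hb'def, div_mul_eq_mul_div, mul_assoc, mul_inv_cancel₀ ht₂.ne', mul_one,
        div_eq_inv_mul]
    rw [smul_smul, smul_smul, c1, c2, smul_add, smul_smul, smul_smul]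
  have core := logdet_concave_core hA hB ha' hb' hab'
  rw [hcomb] at core
  have e1 : (t₁⁻¹ • M₁).det.re = M₁.det.re / t₁ ^ N := by
    rw [det_rsmul_re, inv_pow, div_eq_inv_mul]
  have e2 : (t₂⁻¹ • M₂).det.re = M₂.det.re / t₂ ^ N := by
    rw [det_rsmul_re, inv_pow, div_eq_inv_mul]
  have e3 : (t⁻¹ • (α • M₁ + β • M₂)).det.re = (α • M₁ + β • M₂).det.re / t ^ N := by
    rw [det_rsmul_re, inv_pow, div_eq_inv_mul]
  rw [e1, e2, e3] at core
  have key := mul_le_mul_of_nonneg_left core ht.le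
  calc α * (t₁ * Real.log (M₁.det.re / t₁ ^ N)) + β * (t₂ * Real.log (M₂.det.re / t₂ ^ N))
      = t * (a' * Real.log (M₁.det.re / t₁ ^ N) + b' * Real.log (M₂.det.re / t₂ ^ N)) := by
        rw [ha'def, hb'def]; field_simp
    _ ≤ t * Real.log ((α • M₁ + β • M₂).det.re / t ^ N) := key

/-- The energy-efficiency utility obtained from the Charnes–Cooper transformation:
`u(X) = [(P_c + (1 − tr X) P_max)/(P_c (P_c + P_max))] ·
  log det(I + (P_c P_max/(P_c + (1 − tr X) P_max)) · H̃ X H̃†)`. -/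
noncomputable def eeUtility {m n : ℕ} (Pc Pmax : ℝ) (H : Matrix (Fin n) (Fin m) ℂ)
    (X : Matrix (Fin m) (Fin m) ℂ) : ℝ :=
  (Pc + (1 - X.trace.re) * Pmax) / (Pc * (Pc + Pmax)) *
    Real.log
      ((Matrix.det
          (1 + (Pc * Pmax / (Pc + (1 - X.trace.re) * Pmax)) •
            (H * X * Hᴴ))).re)

section main
variable {m n : ℕ} (Pc Pmax : ℝ) (H : Matrix (Fin n) (Fin m) ℂ)

/-- abbreviations -/
def tFun (X : Matrix (Fin m) (Fin m) ℂ) : ℝ := Pc + (1 - X.trace.re) * Pmax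

def MFun (X : Matrix (Fin m) (Fin m) ℂ) : Matrix (Fin n) (Fin n) ℂ :=
  (tFun Pc Pmax X) • (1 : Matrix (Fin n) (Fin n) ℂ) + (Pc * Pmax) • (H * X * Hᴴ)

lemma eeUtility_eq (X : Matrix (Fin m) (Fin m) ℂ) (ht : 0 < tFun Pc Pmax X) :
    eeUtility Pc Pmax H X
      = (1 / (Pc * (Pc + Pmax))) *
        ((tFun Pc Pmax X) * Real.log ((MFun Pc Pmax H X).det.re / (tFun Pc Pmax X) ^ n)) := by
  set t := tFun Pc Pmax X with htd
  have hmat : (1 : Matrix (Fin n) (Fin n) ℂ) + (Pc * Pmax / t) • (H * X * Hᴴ)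
      = t⁻¹ • MFun Pc Pmax H X := by
    rw [MFun, smul_add, smul_smul, smul_smul, inv_mul_cancel₀ ht.ne', one_smul]
    congr 2
    rw [div_eq_inv_mul]
  have hdet : ((1 : Matrix (Fin n) (Fin n) ℂ)
        + (Pc * Pmax / t) • (H * X * Hᴴ)).det.re
      = (MFun Pc Pmax H X).det.re / t ^ n := by
    rw [hmat, det_rsmul_re]
    simp [inv_pow, div_eq_inv_mul]
  have hr : Pc + (1 - X.trace.re) * Pmax = t := rfl
  rw [eeUtility, hr, hdet]
  ring
end main

lemma trace_re_smul (r : ℝ) (M : Matrix (Fin m) (Fin m) ℂ) :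
    ((r • M).trace).re = r * M.trace.re := by
  rw [trace_smul, Complex.real_smul, Complex.re_ofReal_mul]

/-- For `P_c > 0`, `P_max > 0` and any complex channel matrix `H̃`, the
energy-efficiency utility is concave on the spectrahedron `{X : X ⪰ 0, tr X ≤ 1}`. -/
theorem eeUtility_concaveOn {m n : ℕ} (Pc Pmax : ℝ) (hPc : 0 < Pc) (hPmax : 0 < Pmax)
    (H : Matrix (Fin n) (Fin m) ℂ) :
    ConcaveOn ℝ {X : Matrix (Fin m) (Fin m) ℂ | X.PosSemidef ∧ X.trace.re ≤ 1}
      (eeUtility Pc Pmax H) := by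
  have trace_re_comb : ∀ (α β : ℝ) (P Q : Matrix (Fin m) (Fin m) ℂ),
      ((α • P + β • Q).trace).re = α * P.trace.re + β * Q.trace.re := by
    intro α β P Q
    rw [trace_add, Complex.add_re, trace_re_smul, trace_re_smul]
  constructor
  · intro P hP Q hQ α β ha hb hab
    refine ⟨(hP.1.rsmul ha).add (hQ.1.rsmul hb), ?_⟩
    rw [Set.mem_setOf_eq] at hP hQ
    rw [trace_re_comb]
    nlinarith [mul_le_mul_of_nonneg_left hP.2 ha, mul_le_mul_of_nonneg_left hQ.2 hb]
  · intro P hP Q hQ α β ha hb hab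
    rw [Set.mem_setOf_eq] at hP hQ
    simp only [smul_eq_mul]
    have htP : 0 < tFun Pc Pmax P := by
      have := hP.2; rw [tFun]; nlinarith
    have htQ : 0 < tFun Pc Pmax Q := by
      have := hQ.2; rw [tFun]; nlinarith
    have htComb : tFun Pc Pmax (α • P + β • Q) = α * tFun Pc Pmax P + β * tFun Pc Pmax Q := by
      rw [tFun, tFun, tFun, trace_re_comb]
      linear_combination (-(Pc + Pmax)) * hab
    have htCombPos : 0 < tFun Pc Pmax (α • P + β • Q) := by
      rw [htComb]
      rcases eq_or_lt_of_le ha with h | h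
      · nlinarith
      · nlinarith [mul_pos h htP, mul_nonneg hb htQ.le]
    have hK : ∀ {X : Matrix (Fin m) (Fin m) ℂ}, X.PosSemidef → (H * X * Hᴴ).PosSemidef :=
      fun hX => hX.mul_mul_conjTranspose_same H
    have hMP : (MFun Pc Pmax H P).PosDef := by
      rw [MFun]
      exact (Matrix.PosDef.one.rsmul htP).add_posSemidef ((hK hP.1).rsmul (by positivity))
    have hMQ : (MFun Pc Pmax H Q).PosDef := by
      rw [MFun]
      exact (Matrix.PosDef.one.rsmul htQ).add_posSemidef ((hK hQ.1).rsmul (by positivity))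
    have hMcomb : MFun Pc Pmax H (α • P + β • Q)
        = α • MFun Pc Pmax H P + β • MFun Pc Pmax H Q := by
      rw [MFun, MFun, MFun, htComb]
      rw [Matrix.mul_add, Matrix.add_mul, Matrix.mul_smul, Matrix.smul_mul,
        Matrix.mul_smul, Matrix.smul_mul]
      module
    have hper := perspective_logdet hMP hMQ htP htQ ha hb hab
    simp only [Fintype.card_fin] at hper
    have hD : (0:ℝ) ≤ 1 / (Pc * (Pc + Pmax)) := by positivity
    calc α * eeUtility Pc Pmax H P + β * eeUtility Pc Pmax H Q
        = (1 / (Pc * (Pc + Pmax))) *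
            (α * (tFun Pc Pmax P *
                Real.log ((MFun Pc Pmax H P).det.re / tFun Pc Pmax P ^ n))
              + β * (tFun Pc Pmax Q *
                Real.log ((MFun Pc Pmax H Q).det.re / tFun Pc Pmax Q ^ n))) := by
          rw [eeUtility_eq Pc Pmax H P htP, eeUtility_eq Pc Pmax H Q htQ]; ring
      _ ≤ (1 / (Pc * (Pc + Pmax))) *
            ((α * tFun Pc Pmax P + β * tFun Pc Pmax Q) *
              Real.log ((α • MFun Pc Pmax H P + β • MFun Pc Pmax H Q).det.re /
                (α * tFun Pc Pmax P + β * tFun Pc Pmax Q) ^ n)) :=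
          mul_le_mul_of_nonneg_left hper hD
      _ = eeUtility Pc Pmax H (α • P + β • Q) := by
          rw [eeUtility_eq Pc Pmax H _ htCombPos, htComb, hMcomb]
end
end
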